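/- For every n ≥ 1, the three edges of the discrete triangle T_n are in the same solitaire orbit: the horizontal edge {(a, n−1) : 0 ≤ a ≤ n−1}, the vertical edge {(n−1, b) : 0 ≤ b ≤ n−1}, and the diagonal edge {(a, b) ∈ {0,…,n−1}² : a+b = n−1} can be transformed into one another by finite sequences of triangle solitaire moves. -/

import Mathlib

open Set Relation

/-- Points of the plane lattice. -/
abbrev Pt : Type := ℤ × ℤ

/-- The triangle shape `T = {(0,1),(1,1),(1,0)}`. -/
def Tshape : Set Pt := {(0, 1), (1, 1), (1, 0)}

/-- Translate of a set of points by a vector. -/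
def transl (v : Pt) (S : Set Pt) : Set Pt := (fun p => v + p) '' S

/-- Translate of a finite set of points by a vector. -/
def transF (v : Pt) (S : Finset Pt) : Finset Pt := S.image (fun p => v + p)

/-- A set is filled if every translate of `T` containing at least two of its
points is contained in it. -/
def Filled (F : Set Pt) : Prop :=
  ∀ v : Pt, 2 ≤ (F ∩ transl v Tshape).ncard → transl v Tshape ⊆ F

/-- The fill closure `φ(P)`: smallest filled superset of `P`. -/
def fill (P : Set Pt) : Set Pt := ⋂₀ {F | P ⊆ F ∧ Filled F}

/-- A single triangle solitaire move: if a translate `v + T` contains exactly two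
points of `P`, replace one of them by the third point of `v + T`. -/
def Move (P Q : Finset Pt) : Prop :=
  ∃ v x y : Pt, x ∈ Tshape ∧ y ∈ Tshape ∧ x ≠ y ∧
    v + x ∈ P ∧ v + y ∉ P ∧
    ((P : Set Pt) ∩ transl v Tshape).ncard = 2 ∧
    (Q : Set Pt) = insert (v + y) ((P : Set Pt) \ {v + x})

/-- `Q` is in the solitaire orbit of `P`. -/
def InOrbit (P Q : Finset Pt) : Prop := Relation.ReflTransGen Move P Q

/-- The discrete triangle `T_n = {(a,b) ∈ {0,…,n−1}² : a + b ≥ n − 1}`. -/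
def triangle (n : ℕ) : Set Pt :=
  {p | 0 ≤ p.1 ∧ p.1 < (n : ℤ) ∧ 0 ≤ p.2 ∧ p.2 < (n : ℤ) ∧ (n : ℤ) - 1 ≤ p.1 + p.2}

/-- Neighbourhood of a point: the other points sharing a translate of `T` with it. -/
def nbr (x : Pt) : Set Pt :=
  {y | y ≠ x ∧ ∃ v : Pt, x ∈ transl v Tshape ∧ y ∈ transl v Tshape}

/-- Neighbourhood of a set. -/
def nbrSet (A : Set Pt) : Set Pt := ⋃ a ∈ A, nbr a

/-- Two sets touch if one meets the neighbourhood of the other. -/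
def Touch (A B : Set Pt) : Prop := (A ∩ nbrSet B).Nonempty ∨ (B ∩ nbrSet A).Nonempty

/-- `(r, k, v)` is a decomposition of `φ(P)` into pairwise non-touching
translated triangles `vᵢ + T_{kᵢ}`. -/
def IsDecomp (P : Finset Pt) (r : ℕ) (k : Fin r → ℕ) (v : Fin r → Pt) : Prop :=
  (fill (P : Set Pt) = ⋃ i, transl (v i) (triangle (k i))) ∧
  (∀ i, 1 ≤ k i) ∧
  (∀ i j, i ≠ j → ¬ Touch (transl (v i) (triangle (k i))) (transl (v j) (triangle (k j))))

/-- The horizontal line `L_n = {(a, n−1) : 0 ≤ a ≤ n−1}` (top edge of `T_n`). -/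
def lineF (n : ℕ) : Finset Pt :=
  (Finset.range n).image (fun a : ℕ => (((a : ℤ), (n : ℤ) - 1) : Pt))

/-- The vertical edge `{(n−1, b) : 0 ≤ b ≤ n−1}` of `T_n`. -/
def vlineF (n : ℕ) : Finset Pt :=
  (Finset.range n).image (fun b : ℕ => ((((n : ℤ) - 1), (b : ℤ)) : Pt))

/-- The diagonal edge `{(a, n−1−a) : 0 ≤ a ≤ n−1}` of `T_n`. -/
def dlineF (n : ℕ) : Finset Pt :=
  (Finset.range n).image (fun a : ℕ => (((a : ℤ), (n : ℤ) - 1 - (a : ℤ)) : Pt))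

/-- The points of `T_n` below the top line, listed row `n−2` down to row `0`,
each row from right to left. -/
def belowPts (n : ℕ) : List Pt :=
  (List.range (n - 1)).flatMap (fun i =>
    (List.range (n - 1 - i)).map (fun t =>
      (((n : ℤ) - 1 - (t : ℤ), (n : ℤ) - 2 - (i : ℤ)) : Pt)))

/-- The canonical pattern `P_{n,k}`: the line `L_n` together with the first `k`
points of `T_n \ L_n` in the order: row `n−2` right to left, then row `n−3`, etc. -/
def PnkF (n k : ℕ) : Finset Pt := lineF n ∪ ((belowPts n).take k).toFinset

/-- A TEP family on the triangle shape, with cells ordered `(0,1), (1,1), (1,0)`: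
any two of the three symbols determine the third uniquely. -/
def IsTEP {A : Type} (R : Set (A × A × A)) : Prop :=
  (∀ a b : A, ∃! c : A, (a, b, c) ∈ R) ∧
  (∀ a c : A, ∃! b : A, (a, b, c) ∈ R) ∧
  (∀ b c : A, ∃! a : A, (a, b, c) ∈ R)

/-- A colouring is valid on `T_n` if every translate of `T` inside `T_n`
carries a pattern of `R`. -/
def ValidOn {A : Type} (R : Set (A × A × A)) (n : ℕ) (x : Pt → A) : Prop :=
  ∀ v : Pt, transl v Tshape ⊆ triangle n →
    (x (v + (0, 1)), x (v + (1, 1)), x (v + (1, 0))) ∈ R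

/-- One completion step: a translate of `T` inside `T_n` has exactly two
coloured cells; colour the third using the TEP rule `R`. States are pairs
(set of coloured cells, colouring). -/
def TStep {A : Type} (R : Set (A × A × A)) (n : ℕ)
    (s t : Set Pt × (Pt → A)) : Prop :=
  ∃ v : Pt, transl v Tshape ⊆ triangle n ∧
    ∃ c ∈ transl v Tshape, c ∉ s.1 ∧ transl v Tshape \ {c} ⊆ s.1 ∧
      t.1 = insert c s.1 ∧ (∀ p : Pt, p ≠ c → t.2 p = s.2 p) ∧
      (t.2 (v + (0, 1)), t.2 (v + (1, 1)), t.2 (v + (1, 0))) ∈ R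

/-- `P ⊆ T_n` is a basis: for every colouring of `P`, every maximal run of the
iterative completion process covers `T_n` and produces a valid pattern. -/
def IsBasis {A : Type} (R : Set (A × A × A)) (n : ℕ) (P : Finset Pt) : Prop :=
  (P : Set Pt) ⊆ triangle n ∧
  ∀ q : Pt → A, ∀ s : Set Pt × (Pt → A),
    Relation.ReflTransGen (TStep R n) ((P : Set Pt), q) s →
    (∀ t, ¬ TStep R n s t) →
    triangle n ⊆ s.1 ∧ ValidOn R n s.2

lemma transl_tri (v : Pt) : transl v Tshape =
    {(v.1, v.2+1), (v.1+1, v.2+1), (v.1+1, v.2)} := by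
  simp only [transl, Tshape, Set.image_insert_eq, Set.image_singleton]
  congr 1 <;> [skip; congr 1] <;> simp [Prod.ext_iff]

noncomputable def Qz (n i c : ℤ) : Finset Pt :=
  ((Finset.Ico 0 i).image fun a => ((a, n-1-a) : Pt)) ∪
  ((Finset.Icc i c).image fun a => ((a, n-1-i) : Pt)) ∪
  ((Finset.Icc (c+1) (n-1)).image fun a => ((a, n-2-i) : Pt))

lemma mem_Qz {n i c : ℤ} {x y : ℤ} :
    ((x,y) : Pt) ∈ Qz n i c ↔
      (0 ≤ x ∧ x < i ∧ y = n-1-x) ∨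
      (i ≤ x ∧ x ≤ c ∧ y = n-1-i) ∨
      (c+1 ≤ x ∧ x ≤ n-1 ∧ y = n-2-i) := by
  simp only [Qz, Finset.mem_union, Finset.mem_image, Finset.mem_Ico, Finset.mem_Icc,
    Prod.mk.injEq]
  constructor
  · rintro ((⟨a,⟨h1,h2⟩,rfl,rfl⟩)|(⟨a,⟨h1,h2⟩,rfl,rfl⟩)|(⟨a,⟨h1,h2⟩,rfl,rfl⟩)) <;> omega
  · rintro (⟨h1,h2,rfl⟩|⟨h1,h2,rfl⟩|⟨h1,h2,rfl⟩)
    · exact Or.inl (Or.inl ⟨x, ⟨h1,h2⟩, rfl, rfl⟩)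
    · exact Or.inl (Or.inr ⟨x, ⟨h1,h2⟩, rfl, rfl⟩)
    · exact Or.inr ⟨x, ⟨h1,h2⟩, rfl, rfl⟩
lemma move_Qz {n i c : ℤ} (hi : 0 ≤ i) (hc : i + 1 ≤ c) (hcn : c ≤ n - 1) :
    Move (Qz n i c) (Qz n i (c-1)) := by
  refine ⟨(c-1, n-2-i), (1,1), (1,0), by simp [Tshape], by simp [Tshape], by decide,
    ?_, ?_, ?_, ?_⟩
  · show ((c-1+1, n-2-i+1) : Pt) ∈ Qz n i c
    rw [mem_Qz]; omega
  · show ((c-1+1, n-2-i+0) : Pt) ∉ Qz n i c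
    rw [mem_Qz]; omega
  · have : ((Qz n i c : Set Pt) ∩ transl (c-1, n-2-i) Tshape)
        = {((c-1, n-1-i) : Pt), ((c, n-1-i) : Pt)} := by
      ext ⟨x,y⟩
      simp only [transl_tri, Set.mem_inter_iff, Finset.mem_coe, mem_Qz,
        Set.mem_insert_iff, Set.mem_singleton_iff, Prod.mk.injEq]
      omega
    rw [this, Set.ncard_pair (by intro h; simp only [Prod.mk.injEq] at h; omega)]
  · ext ⟨x,y⟩
    simp only [Prod.mk_add_mk, Set.mem_insert_iff, Set.mem_diff, Set.mem_singleton_iff,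
      Finset.mem_coe, mem_Qz, Prod.mk.injEq]
    omega

lemma move_Qz' {n i c : ℤ} (hi : 0 ≤ i) (hc : i + 1 ≤ c) (hcn : c ≤ n - 1) :
    Move (Qz n i (c-1)) (Qz n i c) := by
  refine ⟨(c-1, n-2-i), (1,0), (1,1), by simp [Tshape], by simp [Tshape], by decide,
    ?_, ?_, ?_, ?_⟩
  · show ((c-1+1, n-2-i+0) : Pt) ∈ Qz n i (c-1)
    rw [mem_Qz]; omega
  · show ((c-1+1, n-2-i+1) : Pt) ∉ Qz n i (c-1)
    rw [mem_Qz]; omega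
  · have : ((Qz n i (c-1) : Set Pt) ∩ transl (c-1, n-2-i) Tshape)
        = {((c-1, n-1-i) : Pt), ((c, n-2-i) : Pt)} := by
      ext ⟨x,y⟩
      simp only [transl_tri, Set.mem_inter_iff, Finset.mem_coe, mem_Qz,
        Set.mem_insert_iff, Set.mem_singleton_iff, Prod.mk.injEq]
      omega
    rw [this, Set.ncard_pair (by intro h; simp only [Prod.mk.injEq] at h; omega)]
  · ext ⟨x,y⟩
    simp only [Prod.mk_add_mk, Set.mem_insert_iff, Set.mem_diff, Set.mem_singleton_iff,
      Finset.mem_coe, mem_Qz, Prod.mk.injEq]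
    omega
lemma Qz_stage {n i : ℤ} (hi : 0 ≤ i) : Qz n i i = Qz n (i+1) (n-1) := by
  ext ⟨x,y⟩
  rw [mem_Qz, mem_Qz]
  omega

lemma orbitA (n i : ℤ) (hi : 0 ≤ i) :
    ∀ d : ℕ, i + d ≤ n - 1 → InOrbit (Qz n i (i + d)) (Qz n i i) := by
  intro d
  induction d with
  | zero => intro _; simp only [Nat.cast_zero, add_zero]; exact Relation.ReflTransGen.refl
  | succ d ih =>
      intro hle
      push_cast at hle ⊢
      have h1 : Move (Qz n i (i + (d+1))) (Qz n i (i + (d+1) - 1)) :=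
        move_Qz hi (by omega) (by omega)
      have h2 : i + ((d:ℤ)+1) - 1 = i + d := by ring
      rw [h2] at h1
      exact Relation.ReflTransGen.head h1 (ih (by omega))

lemma orbitA' (n i : ℤ) (hi : 0 ≤ i) :
    ∀ d : ℕ, i + d ≤ n - 1 → InOrbit (Qz n i i) (Qz n i (i + d)) := by
  intro d
  induction d with
  | zero => intro _; simp only [Nat.cast_zero, add_zero]; exact Relation.ReflTransGen.refl
  | succ d ih =>
      intro hle
      push_cast at hle ⊢
      have h1 : Move (Qz n i (i + (d+1) - 1)) (Qz n i (i + (d+1))) :=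
        move_Qz' hi (by omega) (by omega)
      have h2 : i + ((d:ℤ)+1) - 1 = i + d := by ring
      rw [h2] at h1
      exact Relation.ReflTransGen.tail (ih (by omega)) h1

lemma orbitB (n : ℤ) :
    ∀ i : ℕ, (i:ℤ) ≤ n - 1 → InOrbit (Qz n 0 (n-1)) (Qz n i (n-1)) := by
  intro i
  induction i with
  | zero => intro _; simp only [Nat.cast_zero, add_zero]; exact Relation.ReflTransGen.refl
  | succ i ih =>
      intro hle
      push_cast at hle ⊢
      refine Relation.ReflTransGen.trans (ih (by omega)) ?_
      have h1 : InOrbit (Qz n i (i + (n-1-i).toNat)) (Qz n i i) :=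
        orbitA n i (by positivity) _ (by omega)
      have h2 : (i:ℤ) + ((n-1-(i:ℤ)).toNat : ℤ) = n - 1 := by omega
      rw [h2] at h1
      rw [← Qz_stage (by positivity)]
      exact h1

lemma orbitB' (n : ℤ) :
    ∀ i : ℕ, (i:ℤ) ≤ n - 1 → InOrbit (Qz n i (n-1)) (Qz n 0 (n-1)) := by
  intro i
  induction i with
  | zero => intro _; simp only [Nat.cast_zero, add_zero]; exact Relation.ReflTransGen.refl
  | succ i ih =>
      intro hle
      push_cast at hle ⊢
      refine Relation.ReflTransGen.trans ?_ (ih (by omega))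
      have h1 : InOrbit (Qz n i i) (Qz n i (i + (n-1-i).toNat)) :=
        orbitA' n i (by positivity) _ (by omega)
      have h2 : (i:ℤ) + ((n-1-(i:ℤ)).toNat : ℤ) = n - 1 := by omega
      rw [h2] at h1
      rw [← Qz_stage (by positivity)]
      exact h1
lemma lineF_eq (n : ℕ) : lineF n = Qz n 0 ((n:ℤ)-1) := by
  ext ⟨x,y⟩
  simp only [lineF, Finset.mem_image, Finset.mem_range, mem_Qz, Prod.mk.injEq]
  constructor
  · rintro ⟨a, ha, h1, h2⟩; omega
  · rintro (⟨h1,h2,h3⟩|⟨h1,h2,h3⟩|⟨h1,h2,h3⟩) <;>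
      exact ⟨x.toNat, by omega, by omega, by omega⟩

lemma dlineF_eq (n : ℕ) (hn : 1 ≤ n) : dlineF n = Qz n ((n:ℤ)-1) ((n:ℤ)-1) := by
  ext ⟨x,y⟩
  simp only [dlineF, Finset.mem_image, Finset.mem_range, mem_Qz, Prod.mk.injEq]
  constructor
  · rintro ⟨a, ha, h1, h2⟩; omega
  · rintro (⟨h1,h2,h3⟩|⟨h1,h2,h3⟩|⟨h1,h2,h3⟩) <;>
      exact ⟨x.toNat, by omega, by omega, by omega⟩

lemma line_dline_orbit (n : ℕ) (hn : 1 ≤ n) : InOrbit (lineF n) (dlineF n) := by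
  rw [lineF_eq, dlineF_eq n hn]
  have h := orbitB (n:ℤ) (n-1) (by omega)
  have h2 : (((n-1 : ℕ)):ℤ) = (n:ℤ)-1 := by omega
  rwa [h2] at h

lemma dline_line_orbit (n : ℕ) (hn : 1 ≤ n) : InOrbit (dlineF n) (lineF n) := by
  rw [lineF_eq, dlineF_eq n hn]
  have h := orbitB' (n:ℤ) (n-1) (by omega)
  have h2 : (((n-1 : ℕ)):ℤ) = (n:ℤ)-1 := by omega
  rwa [h2] at h
def swp : Pt → Pt := fun p => (p.2, p.1)

lemma swp_inj : Function.Injective swp := by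
  intro ⟨a,b⟩ ⟨c,d⟩ h
  simp only [swp, Prod.mk.injEq] at h ⊢
  exact ⟨h.2, h.1⟩

lemma swp_add (v p : Pt) : swp (v + p) = swp v + swp p := rfl

lemma swp_Tshape : swp '' Tshape = Tshape := by
  ext ⟨a,b⟩
  simp only [Tshape, Set.mem_image, Set.mem_insert_iff, Set.mem_singleton_iff, swp,
    Prod.mk.injEq, Prod.ext_iff]
  constructor
  · rintro ⟨⟨x,y⟩, h, rfl, rfl⟩; simp at h; omega
  · rintro (⟨rfl,rfl⟩|⟨rfl,rfl⟩|⟨rfl,rfl⟩)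
    · exact ⟨(1,0), by simp, rfl, rfl⟩
    · exact ⟨(1,1), by simp, rfl, rfl⟩
    · exact ⟨(0,1), by simp, rfl, rfl⟩

lemma swp_transl (v : Pt) : transl (swp v) Tshape = swp '' transl v Tshape := by
  have h : swp '' transl v Tshape = (fun p => swp v + p) '' (swp '' Tshape) := by
    rw [transl, ← Set.image_comp, ← Set.image_comp]; rfl
  rw [h, swp_Tshape, transl]

lemma move_swp {P Q : Finset Pt} (h : Move P Q) :
    Move (P.image swp) (Q.image swp) := by
  obtain ⟨v, x, y, hx, hy, hxy, hxP, hyP, hcard, hQ⟩ := h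
  refine ⟨swp v, swp x, swp y, ?_, ?_, fun hc => hxy (swp_inj hc), ?_, ?_, ?_, ?_⟩
  · rw [← swp_Tshape]; exact ⟨x, hx, rfl⟩
  · rw [← swp_Tshape]; exact ⟨y, hy, rfl⟩
  · rw [← swp_add]; exact Finset.mem_image_of_mem _ hxP
  · rw [← swp_add]
    intro hc
    obtain ⟨p, hp, hpe⟩ := Finset.mem_image.mp hc
    exact hyP (swp_inj hpe ▸ hp)
  · rw [Finset.coe_image, swp_transl, ← Set.image_inter swp_inj,
      Set.ncard_image_of_injective _ swp_inj]
    exact hcard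
  · rw [Finset.coe_image, Finset.coe_image, hQ, ← swp_add, ← swp_add,
      Set.image_insert_eq, Set.image_diff swp_inj, Set.image_singleton]

lemma orbit_swp {P Q : Finset Pt} (h : InOrbit P Q) :
    InOrbit (P.image swp) (Q.image swp) :=
  Relation.ReflTransGen.lift (fun R : Finset Pt => R.image swp)
    (fun _ _ hm => move_swp hm) _ _ h

lemma swp_lineF (n : ℕ) : (lineF n).image swp = vlineF n := by
  ext ⟨x,y⟩
  simp only [lineF, vlineF, Finset.mem_image, Finset.mem_range, Prod.mk.injEq]
  constructor
  · rintro ⟨p, ⟨a, ha, rfl⟩, h⟩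
    simp only [swp, Prod.mk.injEq] at h
    exact ⟨a, ha, by omega, by omega⟩
  · rintro ⟨a, ha, h1, h2⟩
    exact ⟨((a:ℤ), (n:ℤ)-1), ⟨a, ha, rfl⟩, by simp only [swp, Prod.mk.injEq]; omega⟩

lemma swp_dlineF (n : ℕ) : (dlineF n).image swp = dlineF n := by
  ext ⟨x,y⟩
  simp only [dlineF, Finset.mem_image, Finset.mem_range, Prod.mk.injEq]
  constructor
  · rintro ⟨p, ⟨a, ha, rfl⟩, h⟩
    simp only [swp, Prod.mk.injEq] at h
    exact ⟨n-1-a, by omega, by omega, by omega⟩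
  · rintro ⟨a, ha, h1, h2⟩
    refine ⟨_, ⟨n-1-a, by omega, rfl⟩, ?_⟩
    simp only [swp, Prod.mk.injEq]
    omega
/-- the three edges of `T_n` are in the same solitaire orbit. -/
theorem edges_same_orbit (n : ℕ) (hn : 1 ≤ n) :
    InOrbit (lineF n) (vlineF n) ∧ InOrbit (lineF n) (dlineF n) ∧
      InOrbit (vlineF n) (dlineF n) := by
  have h1 : InOrbit (lineF n) (dlineF n) := line_dline_orbit n hn
  have h2 : InOrbit (dlineF n) (lineF n) := dline_line_orbit n hn
  have h3 : InOrbit (vlineF n) (dlineF n) := by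
    have h := orbit_swp h1
    rwa [swp_lineF, swp_dlineF] at h
  have h4 : InOrbit (dlineF n) (vlineF n) := by
    have h := orbit_swp h2
    rwa [swp_lineF, swp_dlineF] at h
  exact ⟨h1.trans h4, h1, h3⟩
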